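/- For every α ∈ (0,1), the non-aware test Φ*_NA = (τ*, δ*_NA) belongs to Ŝ_D(α): for every i ∈ {0,1} and every common channel Ã ∈ Ŝ_A(Δ), the probability under H_i that the test accepts the wrong hypothesis is at most α. -/

import Mathlib

open MeasureTheory Filter Finset Set Topology
open scoped ENNReal NNReal ENat

namespace AHT

noncomputable section

variable {X : Type*}

/-- A probability distribution on a finite alphabet. -/
def IsDist [Fintype X] (P : X → ℝ) : Prop :=
  (∀ x, 0 ≤ P x) ∧ ∑ x, P x = 1

/-- Kullback–Leibler divergence. -/
def KL [Fintype X] (P Q : X → ℝ) : ℝ :=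
  ∑ a, P a * Real.log (P a / Q a)

/-- Bhattacharyya distance. -/
def Bhat [Fintype X] (Q0 Q1 : X → ℝ) : ℝ :=
  -Real.log (∑ x, (Q0 x) ^ ((1 : ℝ) / 2) * (Q1 x) ^ ((1 : ℝ) / 2))

/-- Empirical distribution (type) of the first `n` samples. -/
def emp [Fintype X] [DecidableEq X] (n : ℕ) (ω : ℕ → X) (a : X) : ℝ :=
  (((Finset.range n).filter fun k => ω k = a).card : ℝ) / n

/-- Row-stochastic matrix (adversary channel). -/
def RowStoch [Fintype X] (A : X → X → ℝ) : Prop :=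
  (∀ x y, 0 ≤ A x y) ∧ ∀ x, ∑ y, A x y = 1

/-- Output distribution of channel `A` when the input distribution is `P`. -/
def push [Fintype X] (P : X → ℝ) (A : X → X → ℝ) (y : X) : ℝ :=
  ∑ x, P x * A x y

/-- `μ` is the law of an i.i.d. sequence with one-dimensional marginal `Q`. -/
def IsIID [Fintype X] [MeasurableSpace X] (μ : Measure (ℕ → X)) (Q : X → ℝ) : Prop :=
  IsProbabilityMeasure μ ∧
    ∀ (n : ℕ) (v : Fin n → X),
      μ {ω | ∀ k : Fin n, ω (k : ℕ) = v k} = ENNReal.ofReal (∏ k, Q (v k))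

/-- Admissible adversary channels for hypothesis distribution `Pi`. -/
def Adm [Fintype X] (d : (X → ℝ) → (X → ℝ) → ℝ) (Δ : ℝ) (Pi : X → ℝ) :
    Set (X → X → ℝ) :=
  {A | RowStoch A ∧ d Pi (push Pi A) ≤ Δ ∧ ∀ y, 0 < push Pi A y}

/-- The constant `C = Σ_{n ≥ 1} e^{-n^{1-ζ}}` with `ζ = 0.85`. -/
def Cζ : ℝ := ∑' n : ℕ, Real.exp (-((n : ℝ) + 1) ^ (0.15 : ℝ))

/-- The thresholds `γ_n` (with `K = |𝒳|`). -/
def gammaTh (K M : ℕ) (α : ℝ) (n : ℕ) : ℝ :=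
  Real.log (Cζ / α) / n + 1 / (n : ℝ) ^ (0.85 : ℝ) +
    ((K : ℝ) * Real.log ((n : ℝ) + 1) + Real.log ((M : ℝ) - 1)) / n

/-- The statistic `Z_i^{(n)}`. -/
def Zstat [Fintype X] [DecidableEq X] {M : ℕ} (P : Fin M → X → ℝ)
    (d : (X → ℝ) → (X → ℝ) → ℝ) (Δ : ℝ) (i : Fin M) (n : ℕ) (ω : ℕ → X) : ℝ :=
  sInf {r | ∃ j, j ≠ i ∧ ∃ A ∈ Adm d Δ (P j), r = KL (emp n ω) (push (P j) A)}

/-- The one-sided stopping times `T_i`. -/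
def Ti [Fintype X] [DecidableEq X] {M : ℕ} (P : Fin M → X → ℝ)
    (d : (X → ℝ) → (X → ℝ) → ℝ) (Δ α : ℝ) (i : Fin M) (ω : ℕ → X) : ℕ∞ :=
  sInf {t : ℕ∞ | ∃ n : ℕ, t = (n : ℕ∞) ∧ 1 ≤ n ∧
    gammaTh (Fintype.card X) M α n ≤ Zstat P d Δ i n ω}

/-- The stopping time `T*`. -/
def Tstar [Fintype X] [DecidableEq X] {M : ℕ} (P : Fin M → X → ℝ)
    (d : (X → ℝ) → (X → ℝ) → ℝ) (Δ α : ℝ) (ω : ℕ → X) : ℕ∞ :=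
  ⨅ i, Ti P d Δ α i ω

/-- Expected value of an `ℕ∞`-valued stopping time. -/
def ExpT [MeasurableSpace X] (μ : Measure (ℕ → X)) (T : (ℕ → X) → ℕ∞) : ℝ :=
  (∫⁻ ω, ((T ω : ℕ∞) : ℝ≥0∞) ∂μ).toReal

/-- Thresholds in the binary non-aware setting. -/
def gammaNA (K : ℕ) (α : ℝ) (n : ℕ) : ℝ :=
  Real.log (Cζ / α) / n + 1 / (n : ℝ) ^ (0.85 : ℝ) + (K : ℝ) * Real.log ((n : ℝ) + 1) / n

/-- Admissible common channels in the non-aware setting. -/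
def AdmNA [Fintype X] (d : (X → ℝ) → (X → ℝ) → ℝ) (Δ : ℝ) (P0 P1 : X → ℝ) :
    Set (X → X → ℝ) :=
  {A | RowStoch A ∧ max (d P0 (push P0 A)) (d P1 (push P1 A)) ≤ Δ ∧
    (∀ y, 0 < push P0 A y) ∧ ∀ y, 0 < push P1 A y}

/-- The statistic `S_n` in the non-aware setting. -/
def Sstat [Fintype X] [DecidableEq X] (P0 P1 : X → ℝ)
    (d : (X → ℝ) → (X → ℝ) → ℝ) (Δ : ℝ) (n : ℕ) (ω : ℕ → X) : ℝ :=
  sInf {r | ∃ A ∈ AdmNA d Δ P0 P1,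
    r = max (KL (emp n ω) (push P0 A)) (KL (emp n ω) (push P1 A))}

/-- Stopping time `τ*` of the non-aware test. -/
def tauNA [Fintype X] [DecidableEq X] (P0 P1 : X → ℝ)
    (d : (X → ℝ) → (X → ℝ) → ℝ) (Δ α : ℝ) (ω : ℕ → X) : ℕ∞ :=
  sInf {t : ℕ∞ | ∃ n : ℕ, t = (n : ℕ∞) ∧ 1 ≤ n ∧
    gammaNA (Fintype.card X) α n ≤ Sstat P0 P1 d Δ n ω}

/-- A sequential test: a stopping time together with an `F_T`-measurable decision,
expressed functionally (the stopping decision and the final decision depend only on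
the samples observed up to the stopping time). -/
structure SeqTest (X : Type*) (M : ℕ) where
  T : (ℕ → X) → ℕ∞
  dec : (ℕ → X) → Fin M
  adapted : ∀ ω ω' : ℕ → X, ∀ n : ℕ, T ω = (n : ℕ∞) →
    (∀ k < n, ω k = ω' k) → T ω' = (n : ℕ∞) ∧ dec ω' = dec ω

/-- Membership in the decision maker's strategy set `𝒮_D(α)`: all error
probabilities are at most `α` whatever admissible strategy the adversary uses,
and the expected stopping times are finite. -/
def InSD [Fintype X] [MeasurableSpace X] {M : ℕ} (P : Fin M → X → ℝ)
    (d : (X → ℝ) → (X → ℝ) → ℝ) (Δ α : ℝ) (Φ : SeqTest X M) : Prop :=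
  ∀ B : Fin M → X → X → ℝ, (∀ i, B i ∈ Adm d Δ (P i)) →
    ∀ ν : Fin M → Measure (ℕ → X), (∀ i, IsIID (ν i) (push (P i) (B i))) →
      ∀ i, ν i {ω | Φ.dec ω ≠ i} ≤ ENNReal.ofReal α ∧
        ∫⁻ ω, ((Φ.T ω : ℕ∞) : ℝ≥0∞) ∂(ν i) < ⊤



/-! ### Auxiliary lemmas -/

section Aux

lemma aux_summable : Summable (fun m : ℕ => Real.exp (-((m:ℝ)+1) ^ (0.15:ℝ))) := by
  have h1 : (fun x : ℝ => Real.log x) =o[atTop] fun x : ℝ => x ^ (0.15:ℝ) :=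
    isLittleO_log_rpow_atTop (by norm_num)
  have h2 : ∀ᶠ x : ℝ in atTop, ‖Real.log x‖ ≤ (1/2) * ‖x ^ (0.15:ℝ)‖ :=
    h1.def (by norm_num)
  have h3 : ∀ᶠ x : ℝ in atTop, Real.exp (-x ^ (0.15:ℝ)) ≤ 1 / x ^ 2 := by
    filter_upwards [h2, eventually_ge_atTop (1:ℝ)] with x hx hx1
    have hx0 : (0:ℝ) < x := by linarith
    have hlog : 0 ≤ Real.log x := Real.log_nonneg hx1
    have hrp : 0 ≤ x ^ (0.15:ℝ) := Real.rpow_nonneg hx0.le _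
    rw [Real.norm_of_nonneg hlog, Real.norm_of_nonneg hrp] at hx
    have h4 : Real.exp (-x ^ (0.15:ℝ)) ≤ Real.exp (-(2 * Real.log x)) :=
      Real.exp_le_exp.mpr (by linarith)
    refine h4.trans_eq ?_
    rw [Real.exp_neg, show (2:ℝ) * Real.log x = Real.log (x ^ 2) by
      rw [Real.log_pow]; push_cast; ring, Real.exp_log (by positivity)]
    norm_num
  have hsum2 : Summable (fun m : ℕ => 1 / ((m:ℝ)+1) ^ 2) := by
    have := (summable_nat_add_iff (f := fun n : ℕ => 1 / (n:ℝ) ^ 2) 1).mpr ?_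
    · exact this.congr (by intro m; push_cast; ring_nf)
    · exact Real.summable_one_div_nat_pow.mpr one_lt_two
  have hcomp : ∀ᶠ m : ℕ in atTop,
      ‖Real.exp (-((m:ℝ)+1) ^ (0.15:ℝ))‖ ≤ 1 * ‖1 / ((m:ℝ)+1) ^ 2‖ := by
    have ht : Tendsto (fun m : ℕ => (m:ℝ)+1) atTop atTop :=
      tendsto_atTop_add_const_right _ 1 tendsto_natCast_atTop_atTop
    filter_upwards [ht.eventually h3] with m hm
    rw [Real.norm_of_nonneg (Real.exp_pos _).le, one_mul, Real.norm_of_nonneg (by positivity)]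
    exact hm
  exact summable_of_isBigO_nat hsum2 (Asymptotics.IsBigO.of_bound 1 hcomp)

lemma Cζ_pos : 0 < Cζ :=
  Summable.tsum_pos aux_summable (fun _ => (Real.exp_pos _).le) 0 (Real.exp_pos _)

variable [Fintype X] [DecidableEq X]

/-- Count of occurrences of `a` in the word `v`. -/
def cnt (n : ℕ) (v : Fin n → X) (a : X) : ℕ := Finset.card (Finset.univ.filter fun k => v k = a)

lemma sum_cnt (n : ℕ) (v : Fin n → X) : ∑ a, cnt n v a = n := by
  have := Finset.card_eq_sum_card_fiberwise (f := v) (s := Finset.univ) (t := Finset.univ)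
    (fun x _ => Finset.mem_univ _)
  simpa [cnt] using this.symm

lemma prod_comp_cnt (n : ℕ) (v : Fin n → X) (f : X → ℝ) :
    ∏ k, f (v k) = ∏ a, f a ^ cnt n v a := by
  have h1 : ∏ k, f (v k) = ∏ b ∈ Finset.image v Finset.univ, f b ^ cnt n v b :=
    Finset.prod_comp f v
  rw [h1]
  refine Finset.prod_subset (Finset.subset_univ _) ?_
  intro a _ ha
  have : cnt n v a = 0 := by
    simp only [cnt, Finset.card_eq_zero, Finset.filter_eq_empty_iff]
    intro k _
    intro h; exact ha (Finset.mem_image.mpr ⟨k, Finset.mem_univ _, h⟩)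
  rw [this, pow_zero]

lemma sum_prod_type_le (n : ℕ) (hn : 1 ≤ n) :
    ∑ v : Fin n → X, ∏ k, ((cnt n v (v k) : ℝ) / n) ≤ ((n:ℝ)+1) ^ Fintype.card X := by
  classical
  set T : (Fin n → X) → (X → Fin (n+1)) := fun v a => ⟨cnt n v a, by
    have : cnt n v a ≤ n := by
      simpa [cnt] using
        (Finset.card_filter_le (Finset.univ : Finset (Fin n)) (fun k => v k = a)).trans_eq
          (by simp)
    omega⟩ with hT
  rw [← Finset.sum_fiberwise (Finset.univ : Finset (Fin n → X)) T
    (fun v => ∏ k, ((cnt n v (v k) : ℝ) / n))]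
  have hb : ∀ t : X → Fin (n+1),
      ∑ v ∈ Finset.univ.filter (fun v => T v = t), ∏ k, ((cnt n v (v k) : ℝ) / n) ≤ 1 := by
    intro t
    rcases (Finset.univ.filter (fun v => T v = t)).eq_empty_or_nonempty with he | ⟨v₀, hv₀⟩
    · rw [he]; simp
    · have hv₀t : T v₀ = t := (Finset.mem_filter.mp hv₀).2
      set p : X → ℝ := fun a => (t a : ℝ) / n with hp
      have hps : ∑ a, p a = 1 := by
        have : ∑ a, ((t a : ℕ) : ℝ) = (n : ℝ) := by
          rw [← hv₀t]
          have := sum_cnt n v₀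
          push_cast [hT, ← this]
          norm_num
        rw [hp]
        rw [← Finset.sum_div, this, div_self (by positivity)]
      have heq : ∀ v ∈ Finset.univ.filter (fun v => T v = t),
          ∏ k, ((cnt n v (v k) : ℝ) / n) = ∏ k, p (v k) := by
        intro v hv
        have hvt : T v = t := (Finset.mem_filter.mp hv).2
        refine Finset.prod_congr rfl fun k _ => ?_
        have : cnt n v (v k) = (t (v k) : ℕ) := by rw [← hvt]
        rw [this]
      rw [Finset.sum_congr rfl heq]
      calc ∑ v ∈ Finset.univ.filter (fun v => T v = t), ∏ k, p (v k)
          ≤ ∑ v : Fin n → X, ∏ k, p (v k) :=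
            Finset.sum_le_sum_of_subset_of_nonneg (Finset.filter_subset _ _)
              (fun v _ _ => Finset.prod_nonneg fun k _ => by positivity)
        _ = ∏ k : Fin n, ∑ a, p a := by
            rw [Finset.prod_univ_sum (fun _ => Finset.univ) (fun _ a => p a)]
            rfl
        _ = 1 := by rw [hps]; simp
  calc ∑ t : X → Fin (n+1),
        ∑ v ∈ Finset.univ.filter (fun v => T v = t), ∏ k, ((cnt n v (v k) : ℝ) / n)
      ≤ ∑ _t : X → Fin (n+1), (1:ℝ) := Finset.sum_le_sum fun t _ => hb t
    _ = ((n:ℝ)+1) ^ Fintype.card X := by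
        simp only [Finset.sum_const, Finset.card_univ, nsmul_eq_mul, mul_one, Fintype.card_fun,
          Fintype.card_fin]
        push_cast
        ring

lemma KL_nonneg_aux {P Q : X → ℝ} (hP : IsDist P) (hQ : IsDist Q)
    (hQpos : ∀ y, 0 < Q y) : 0 ≤ KL P Q := by
  have hterm : ∀ a, P a - Q a ≤ P a * Real.log (P a / Q a) := by
    intro a
    rcases eq_or_lt_of_le (hP.1 a) with h0 | hpos
    · rw [← h0]
      simp
      exact (hQpos a).le
    · have hq := hQpos a
      have hlog : Real.log (Q a / P a) ≤ Q a / P a - 1 :=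
        Real.log_le_sub_one_of_pos (by positivity)
      have hrev : Real.log (P a / Q a) = - Real.log (Q a / P a) := by
        rw [← Real.log_inv, inv_div]
      rw [hrev]
      have := mul_le_mul_of_nonneg_left hlog hpos.le
      have h2 : P a * (Q a / P a - 1) = Q a - P a := by field_simp
      nlinarith
  have := Finset.sum_le_sum (fun a (_ : a ∈ Finset.univ) => hterm a)
  rw [Finset.sum_sub_distrib, hP.2, hQ.2] at this
  simpa [KL] using this

lemma type_identity (n : ℕ) (hn : 1 ≤ n) (v : Fin n → X) (Q : X → ℝ)
    (hQpos : ∀ y, 0 < Q y) :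
    ∏ a, Q a ^ cnt n v a =
      Real.exp (-(n:ℝ) * KL (fun a => (cnt n v a : ℝ)/n) Q) *
        ∏ a, ((cnt n v a : ℝ)/n) ^ cnt n v a := by
  have hn0 : (0:ℝ) < n := by exact_mod_cast hn
  have key : ∀ a, Q a ^ cnt n v a =
      Real.exp (-(n:ℝ) * (((cnt n v a : ℝ)/n) * Real.log (((cnt n v a : ℝ)/n) / Q a))) *
        ((cnt n v a : ℝ)/n) ^ cnt n v a := by
    intro a
    rcases Nat.eq_zero_or_pos (cnt n v a) with h0 | hpos
    · rw [h0]; simp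
    · set p : ℝ := (cnt n v a : ℝ)/n with hp
      have hppos : 0 < p := by positivity
      have h1 : -(n:ℝ) * (p * Real.log (p / Q a)) = (cnt n v a : ℝ) * Real.log (Q a / p) := by
        have : Real.log (Q a / p) = - Real.log (p / Q a) := by
          rw [← Real.log_inv, inv_div]
        rw [this, hp]
        field_simp
      rw [h1]
      have h2 : Real.exp ((cnt n v a : ℝ) * Real.log (Q a / p)) = (Q a / p) ^ cnt n v a := by
        rw [mul_comm, ← Real.rpow_def_of_pos (div_pos (hQpos a) hppos), Real.rpow_natCast]
      rw [h2, div_pow, div_mul_cancel₀]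
      positivity
  calc ∏ a, Q a ^ cnt n v a
      = ∏ a, (Real.exp (-(n:ℝ) * (((cnt n v a : ℝ)/n) *
          Real.log (((cnt n v a : ℝ)/n) / Q a))) *
        ((cnt n v a : ℝ)/n) ^ cnt n v a) := Finset.prod_congr rfl fun a _ => key a
    _ = _ := by
        rw [Finset.prod_mul_distrib, ← Real.exp_sum, KL, ← Finset.mul_sum]

lemma emp_eq_cnt (n : ℕ) (ω : ℕ → X) (a : X) :
    emp n ω a = (cnt n (fun k : Fin n => ω k) a : ℝ) / n := by
  unfold emp cnt
  congr 2
  rw [Finset.card_filter, Finset.card_filter]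
  exact (Fin.sum_univ_eq_sum_range (fun k => if ω k = a then 1 else 0) n).symm

lemma emp_isDist (n : ℕ) (hn : 1 ≤ n) (ω : ℕ → X) : IsDist (emp n ω) := by
  have hn0 : (0:ℝ) < n := by exact_mod_cast hn
  constructor
  · intro a; unfold emp; positivity
  · have : ∑ a, emp n ω a = ∑ a, (cnt n (fun k : Fin n => ω k) a : ℝ) / n :=
      Finset.sum_congr rfl fun a _ => emp_eq_cnt n ω a
    rw [this, ← Finset.sum_div]
    rw [show ∑ a, (cnt n (fun k : Fin n => ω k) a : ℝ) = (n:ℝ) by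
      rw [← Nat.cast_sum, sum_cnt]]
    exact div_self hn0.ne'

lemma push_isDist {P : X → ℝ} {A : X → X → ℝ} (hP : IsDist P) (hA : RowStoch A) :
    IsDist (push P A) := by
  constructor
  · intro y
    exact Finset.sum_nonneg fun x _ => mul_nonneg (hP.1 x) (hA.1 x y)
  · rw [show ∑ y, push P A y = ∑ y, ∑ x, P x * A x y from rfl, Finset.sum_comm]
    have : ∀ x, ∑ y, P x * A x y = P x := by
      intro x
      rw [← Finset.mul_sum, hA.2 x, mul_one]
    rw [Finset.sum_congr rfl fun x _ => this x, hP.2]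

/-- Per-`n` method-of-types bound. -/
lemma Fbound [MeasurableSpace X] (Q : X → ℝ) (hQpos : ∀ y, 0 < Q y)
    (μ : Measure (ℕ → X)) (hμ : IsIID μ Q) (γ : ℝ) (n : ℕ) (hn : 1 ≤ n) :
    μ {ω | γ ≤ KL (emp n ω) Q} ≤
      ENNReal.ofReal (((n:ℝ)+1) ^ Fintype.card X * Real.exp (-(n:ℝ) * γ)) := by
  classical
  set Bad : Finset (Fin n → X) :=
    Finset.univ.filter (fun v => γ ≤ KL (fun a => (cnt n v a : ℝ)/n) Q) with hBad
  have hsub : {ω | γ ≤ KL (emp n ω) Q} ⊆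
      ⋃ v ∈ Bad, {ω : ℕ → X | ∀ k : Fin n, ω (k : ℕ) = v k} := by
    intro ω hω
    have hemp : emp n ω = fun a => (cnt n (fun k : Fin n => ω k) a : ℝ) / n :=
      funext fun a => emp_eq_cnt n ω a
    have hmem : (fun k : Fin n => ω k) ∈ Bad := by
      rw [hBad, Finset.mem_filter]
      exact ⟨Finset.mem_univ _, by rw [← hemp]; exact hω⟩
    exact Set.mem_biUnion hmem fun k => rfl
  have h1 : μ {ω | γ ≤ KL (emp n ω) Q} ≤
      ∑ v ∈ Bad, μ {ω : ℕ → X | ∀ k : Fin n, ω (k : ℕ) = v k} :=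
    (measure_mono hsub).trans (measure_biUnion_finset_le Bad _)
  have h2 : ∑ v ∈ Bad, μ {ω : ℕ → X | ∀ k : Fin n, ω (k : ℕ) = v k} =
      ENNReal.ofReal (∑ v ∈ Bad, ∏ k, Q (v k)) := by
    rw [ENNReal.ofReal_sum_of_nonneg
      (fun v _ => Finset.prod_nonneg fun k _ => (hQpos (v k)).le)]
    exact Finset.sum_congr rfl fun v _ => hμ.2 n v
  have h3 : ∑ v ∈ Bad, ∏ k, Q (v k) ≤
      ((n:ℝ)+1) ^ Fintype.card X * Real.exp (-(n:ℝ) * γ) := by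
    have hstep : ∀ v ∈ Bad, ∏ k, Q (v k) ≤
        Real.exp (-(n:ℝ) * γ) * ∏ k, ((cnt n v (v k) : ℝ)/n) := by
      intro v hv
      have hKL : γ ≤ KL (fun a => (cnt n v a : ℝ)/n) Q :=
        (Finset.mem_filter.mp hv).2
      have hprod0 : (0:ℝ) ≤ ∏ a, ((cnt n v a : ℝ)/n) ^ cnt n v a :=
        Finset.prod_nonneg fun a _ => pow_nonneg (by positivity) _
      calc ∏ k, Q (v k) = ∏ a, Q a ^ cnt n v a := prod_comp_cnt n v Q
        _ = Real.exp (-(n:ℝ) * KL (fun a => (cnt n v a : ℝ)/n) Q) *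
              ∏ a, ((cnt n v a : ℝ)/n) ^ cnt n v a := type_identity n hn v Q hQpos
        _ ≤ Real.exp (-(n:ℝ) * γ) * ∏ a, ((cnt n v a : ℝ)/n) ^ cnt n v a := by
            refine mul_le_mul_of_nonneg_right ?_ hprod0
            refine Real.exp_le_exp.mpr ?_
            have hn0 : (0:ℝ) < n := by exact_mod_cast hn
            nlinarith
        _ = Real.exp (-(n:ℝ) * γ) * ∏ k, ((cnt n v (v k) : ℝ)/n) := by
            rw [← prod_comp_cnt n v (fun a => (cnt n v a : ℝ)/n)]
    calc ∑ v ∈ Bad, ∏ k, Q (v k)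
        ≤ ∑ v ∈ Bad, Real.exp (-(n:ℝ) * γ) * ∏ k, ((cnt n v (v k) : ℝ)/n) :=
          Finset.sum_le_sum hstep
      _ = Real.exp (-(n:ℝ) * γ) * ∑ v ∈ Bad, ∏ k, ((cnt n v (v k) : ℝ)/n) := by
          rw [Finset.mul_sum]
      _ ≤ Real.exp (-(n:ℝ) * γ) * ∑ v : Fin n → X, ∏ k, ((cnt n v (v k) : ℝ)/n) := by
          refine mul_le_mul_of_nonneg_left ?_ (Real.exp_pos _).le
          exact Finset.sum_le_sum_of_subset_of_nonneg (Finset.subset_univ _)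
            (fun v _ _ => Finset.prod_nonneg fun k _ => by positivity)
      _ ≤ Real.exp (-(n:ℝ) * γ) * (((n:ℝ)+1) ^ Fintype.card X) := by
          refine mul_le_mul_of_nonneg_left (sum_prod_type_le n hn) (Real.exp_pos _).le
      _ = ((n:ℝ)+1) ^ Fintype.card X * Real.exp (-(n:ℝ) * γ) := mul_comm _ _
  exact h1.trans (h2.le.trans (ENNReal.ofReal_le_ofReal h3))

/-- Arithmetic evaluation of the per-`n` bound at `γ = gammaNA`. -/
lemma gamma_arith (K : ℕ) (α : ℝ) (hα0 : 0 < α) (n : ℕ) (hn : 1 ≤ n) :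
    ((n:ℝ)+1) ^ K * Real.exp (-(n:ℝ) * gammaNA K α n) =
      (α / Cζ) * Real.exp (-((n:ℝ) ^ (0.15:ℝ))) := by
  have hn0 : (0:ℝ) < n := by exact_mod_cast hn
  have hC := Cζ_pos
  have hsum : (n:ℝ) * gammaNA K α n =
      Real.log (Cζ / α) + (n:ℝ) ^ (0.15:ℝ) + (K:ℝ) * Real.log ((n:ℝ)+1) := by
    unfold gammaNA
    have h085 : (n:ℝ) * (1 / (n:ℝ) ^ (0.85:ℝ)) = (n:ℝ) ^ (0.15:ℝ) := by
      rw [mul_one_div, show (0.15:ℝ) = 1 - 0.85 by norm_num, Real.rpow_sub hn0,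
        Real.rpow_one]
    rw [mul_add, mul_add, h085, mul_div_cancel₀ _ hn0.ne', mul_div_cancel₀ _ hn0.ne']
  rw [neg_mul, hsum]
  have e1 : Real.exp (-(Real.log (Cζ / α) + (n:ℝ) ^ (0.15:ℝ) + (K:ℝ) * Real.log ((n:ℝ)+1)))
      = Real.exp (-Real.log (Cζ / α)) * Real.exp (-((n:ℝ) ^ (0.15:ℝ))) *
        Real.exp (-((K:ℝ) * Real.log ((n:ℝ)+1))) := by
    rw [← Real.exp_add, ← Real.exp_add]; ring_nf
  have e2 : Real.exp (-Real.log (Cζ / α)) = α / Cζ := by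
    rw [Real.exp_neg, Real.exp_log (by positivity), inv_div]
  have e3 : Real.exp (-((K:ℝ) * Real.log ((n:ℝ)+1))) = (((n:ℝ)+1) ^ K)⁻¹ := by
    rw [Real.exp_neg]
    congr 1
    rw [show (K:ℝ) * Real.log ((n:ℝ)+1) = Real.log (((n:ℝ)+1) ^ K) by
      rw [Real.log_pow], Real.exp_log (by positivity)]
  rw [e1, e2, e3]
  field_simp

/-- The key total error bound. -/
lemma total_bound [MeasurableSpace X] (Q : X → ℝ) (hQpos : ∀ y, 0 < Q y)
    (μ : Measure (ℕ → X)) (hμ : IsIID μ Q) (α : ℝ) (hα0 : 0 < α) :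
    μ {ω | ∃ n : ℕ, 1 ≤ n ∧ gammaNA (Fintype.card X) α n ≤ KL (emp n ω) Q} ≤
      ENNReal.ofReal α := by
  classical
  set K := Fintype.card X
  set F : ℕ → Set (ℕ → X) :=
    fun n => {ω | 1 ≤ n ∧ gammaNA K α n ≤ KL (emp n ω) Q} with hF
  have hsub : {ω | ∃ n : ℕ, 1 ≤ n ∧ gammaNA K α n ≤ KL (emp n ω) Q} ⊆ ⋃ n, F n := by
    intro ω ⟨n, hn, hγ⟩
    exact Set.mem_iUnion.mpr ⟨n, hn, hγ⟩
  set g : ℕ → ℝ≥0∞ := fun n =>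
    if n = 0 then 0 else ENNReal.ofReal ((α / Cζ) * Real.exp (-((n:ℝ) ^ (0.15:ℝ)))) with hg
  have hFg : ∀ n, μ (F n) ≤ g n := by
    intro n
    rcases Nat.eq_zero_or_pos n with h0 | hpos
    · subst h0
      have : F 0 = ∅ := by
        ext ω; simp [hF]
      rw [this, measure_empty, hg]
      simp
    · have hsub2 : F n ⊆ {ω | gammaNA K α n ≤ KL (emp n ω) Q} := fun ω h => h.2
      have := (measure_mono hsub2).trans (Fbound Q hQpos μ hμ (gammaNA K α n) n hpos)
      rw [hg]
      simp only [Nat.pos_iff_ne_zero.mp hpos, if_false]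
      refine this.trans_eq ?_
      rw [gamma_arith K α hα0 n hpos]
  have hμE : μ {ω | ∃ n : ℕ, 1 ≤ n ∧ gammaNA K α n ≤ KL (emp n ω) Q} ≤ ∑' n, g n :=
    ((measure_mono hsub).trans (measure_iUnion_le F)).trans (ENNReal.tsum_le_tsum hFg)
  refine hμE.trans ?_
  have hshift : ∑' n, g n = ∑' m : ℕ, g (m + 1) := by
    refine (Function.Injective.tsum_eq (f := g) Nat.succ_injective ?_).symm
    intro x hx
    rcases Nat.eq_zero_or_pos x with h0 | hp
    · exfalso
      apply hx
      rw [h0, hg]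
      simp
    · exact ⟨x - 1, by omega⟩
  rw [hshift]
  have hterm : ∀ m : ℕ, g (m + 1) =
      ENNReal.ofReal ((α / Cζ) * Real.exp (-(((m:ℝ)+1) ^ (0.15:ℝ)))) := by
    intro m
    rw [hg]
    simp only [Nat.succ_ne_zero, if_false]
    congr 3
    push_cast
    ring
  rw [tsum_congr hterm]
  have hsummult : Summable (fun m : ℕ => (α / Cζ) * Real.exp (-(((m:ℝ)+1) ^ (0.15:ℝ)))) :=
    aux_summable.mul_left _
  rw [← ENNReal.ofReal_tsum_of_nonneg
    (fun m => mul_nonneg (div_nonneg hα0.le Cζ_pos.le) (Real.exp_pos _).le) hsummult]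
  have : ∑' m : ℕ, (α / Cζ) * Real.exp (-(((m:ℝ)+1) ^ (0.15:ℝ))) = (α / Cζ) * Cζ := by
    rw [tsum_mul_left, Cζ]
  rw [this, div_mul_cancel₀ _ Cζ_pos.ne']

end Aux

/-- for every α ∈ (0,1), the non-aware test Φ*_NA belongs to Ŝ_D(α):
under each hypothesis and any admissible common channel, the probability of accepting
the wrong hypothesis is at most α. -/
theorem na_test_mem_SD {X : Type*} [Fintype X] [DecidableEq X] [MeasurableSpace X]
    (P0 P1 : X → ℝ) (h0 : IsDist P0) (h1 : IsDist P1) (h01 : P0 ≠ P1)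
    (d : (X → ℝ) → (X → ℝ) → ℝ) (Δ : ℝ) (hΔ : 0 < Δ)
    (α : ℝ) (hα0 : 0 < α) (hα1 : α < 1)
    (Atil : X → X → ℝ) (hAtil : Atil ∈ AdmNA d Δ P0 P1)
    (μ0 μ1 : Measure (ℕ → X)) (hμ0 : IsIID μ0 (push P0 Atil)) (hμ1 : IsIID μ1 (push P1 Atil)) :
    μ0 {ω | ∃ n : ℕ, 1 ≤ n ∧ tauNA P0 P1 d Δ α ω = (n : ℕ∞) ∧
        gammaNA (Fintype.card X) α n ≤
          sInf {r : ℝ | ∃ A ∈ AdmNA d Δ P0 P1, r = KL (emp n ω) (push P0 A)}} ≤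
      ENNReal.ofReal α ∧
    μ1 {ω | ∃ n : ℕ, 1 ≤ n ∧ tauNA P0 P1 d Δ α ω = (n : ℕ∞) ∧
        gammaNA (Fintype.card X) α n ≤
          sInf {r : ℝ | ∃ A ∈ AdmNA d Δ P0 P1, r = KL (emp n ω) (push P1 A)}} ≤
      ENNReal.ofReal α := by
  obtain ⟨hRS, hdmax, hpos0, hpos1⟩ := hAtil
  have hAtil' : Atil ∈ AdmNA d Δ P0 P1 := ⟨hRS, hdmax, hpos0, hpos1⟩
  constructor
  · refine le_trans (measure_mono ?_) (total_bound (push P0 Atil) hpos0 μ0 hμ0 α hα0)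
    rintro ω ⟨n, hn, -, hγ⟩
    refine ⟨n, hn, hγ.trans ?_⟩
    refine csInf_le ⟨0, ?_⟩ ⟨Atil, hAtil', rfl⟩
    rintro r ⟨A, hA, rfl⟩
    exact KL_nonneg_aux (emp_isDist n hn ω) (push_isDist h0 hA.1) hA.2.2.1
  · refine le_trans (measure_mono ?_) (total_bound (push P1 Atil) hpos1 μ1 hμ1 α hα0)
    rintro ω ⟨n, hn, -, hγ⟩
    refine ⟨n, hn, hγ.trans ?_⟩
    refine csInf_le ⟨0, ?_⟩ ⟨Atil, hAtil', rfl⟩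
    rintro r ⟨A, hA, rfl⟩
    exact KL_nonneg_aux (emp_isDist n hn ω) (push_isDist h1 hA.1) hA.2.2.2

end

end AHT
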